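/- Let h : 𝔻 → ℂ be holomorphic with h(0) = 1, and suppose there are α > 0 and C₀ ≥ 0 with log|h(w)| ≤ C₀ / (1−|w|)^α for all w ∈ 𝔻. Then for every τ > 0 there is a constant C(α, τ) > 0, independent of h and C₀, such that the sum over the zeros w of h in 𝔻, counted with multiplicity, satisfies ∑_{w ∈ 𝒵(h)} (1−|w|)^{α+τ+1} ≤ C(α, τ) · C₀. -/

import Mathlib

open Complex Metric


lemma count_aux (α : ℝ) (hα : 0 < α) (C₀ : ℝ) (hC₀ : 0 ≤ C₀)
    (h : ℂ → ℂ) (hdiff : DifferentiableOn ℂ h (ball (0 : ℂ) 1)) (h0 : h 0 = 1)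
    (hgrowth : ∀ w ∈ ball (0 : ℂ) 1, Real.log (‖h w‖) ≤ C₀ / (1 - ‖w‖) ^ α)
    (S : Finset ℂ) (m : ℂ → ℕ)
    (hS : ∀ w ∈ S, w ∈ ball (0 : ℂ) 1 ∧ h w = 0 ∧
      ∃ g : ℂ → ℂ, AnalyticAt ℂ g w ∧ g w ≠ 0 ∧
        ∀ᶠ z in nhds w, h z = (z - w) ^ (m w) * g z)
    (s : ℝ) (hs0 : 0 < s) (hs1 : s < 1) :
    ∑ w ∈ S.filter (fun w => ‖w‖ ≤ s), (m w : ℝ)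
      ≤ 2 ^ (α + 1) * C₀ / (1 - s) ^ (α + 1) := by
  classical
  set r : ℝ := (1 + s) / 2 with hrdef
  have hr0 : 0 < r := by rw [hrdef]; linarith
  have hrs : s < r := by rw [hrdef]; linarith
  have hr1 : r < 1 := by rw [hrdef]; linarith
  have h1r : 1 - r = (1 - s) / 2 := by rw [hrdef]; ring
  have hw0 : ∀ w ∈ S, w ≠ 0 := by
    intro w hw hww
    have := (hS w hw).2.1
    rw [hww, h0] at this
    exact one_ne_zero this
  have hSg : ∀ w : ℂ, ∃ g : ℂ → ℂ, w ∈ S →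
      AnalyticAt ℂ g w ∧ g w ≠ 0 ∧ ∀ᶠ z in nhds w, h z = (z - w) ^ (m w) * g z := by
    intro w
    by_cases hw : w ∈ S
    · obtain ⟨-, -, g, h1, h2, h3⟩ := hS w hw
      exact ⟨g, fun _ => ⟨h1, h2, h3⟩⟩
    · exact ⟨0, fun hw' => absurd hw' hw⟩
  choose g hg using hSg
  set T : Finset ℂ := S.filter (fun w => ‖w‖ ≤ s) with hTdef
  have hTS : ∀ w ∈ T, w ∈ S ∧ ‖w‖ ≤ s := fun w hw => Finset.mem_filter.mp hw
  have hTabs : ∀ w ∈ T, 0 < ‖w‖ :=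
    fun w hw => norm_pos_iff.mpr (hw0 w (hTS w hw).1)
  set N : ℕ := ∑ w ∈ T, m w with hNdef
  set φ : ℂ → ℂ := fun z => ∏ w ∈ T, (z - w) ^ (m w) with hφdef
  have hφa : ∀ z : ℂ, AnalyticAt ℂ φ z := fun z =>
    Finset.analyticAt_fun_prod T (fun w _ => ((analyticAt_id).sub analyticAt_const).pow _)
  have hφne : ∀ z : ℂ, z ∉ T → φ z ≠ 0 := by
    intro z hz
    apply Finset.prod_ne_zero_iff.mpr
    intro w hw
    exact pow_ne_zero _ (sub_ne_zero.mpr (fun hzw => hz (hzw ▸ hw)))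
  set F : ℂ → ℂ := fun z =>
    if z ∈ T then g z z / ∏ w ∈ T.erase z, (z - w) ^ (m w) else h z / φ z with hFdef
  -- F is analytic on the unit ball
  have hFa : ∀ z₀ ∈ ball (0 : ℂ) 1, AnalyticAt ℂ F z₀ := by
    intro z₀ hz₀
    by_cases hz₀T : z₀ ∈ T
    · have hz₀S := (hTS z₀ hz₀T).1
      obtain ⟨hga, hgne, hfac⟩ := hg z₀ hz₀S
      have hG : AnalyticAt ℂ (fun z => g z₀ z / ∏ w ∈ T.erase z₀, (z - w) ^ (m w)) z₀ := by
        refine hga.div (Finset.analyticAt_fun_prod _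
          (fun w _ => ((analyticAt_id).sub analyticAt_const).pow _)) ?_
        apply Finset.prod_ne_zero_iff.mpr
        intro w hw
        exact pow_ne_zero _ (sub_ne_zero.mpr ((Finset.ne_of_mem_erase hw).symm))
      apply hG.congr
      have hopen : IsOpen ((↑(T.erase z₀) : Set ℂ))ᶜ :=
        (Set.Finite.isClosed (Finset.finite_toSet _)).isOpen_compl
      have hmem : ((↑(T.erase z₀) : Set ℂ))ᶜ ∈ nhds z₀ := by
        apply hopen.mem_nhds
        simp
      filter_upwards [hfac, hmem] with z hz1 hz2
      by_cases hzz : z = z₀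
      · subst hzz
        simp only [hFdef, if_pos hz₀T]
      · have hzT : z ∉ T := by
          intro hzT
          exact hz2 (by simpa using And.intro hzT hzz)
        simp only [hFdef, if_neg hzT, hφdef]
        rw [← Finset.mul_prod_erase T (fun w => (z - w) ^ (m w)) hz₀T, hz1,
          mul_div_mul_left _ _ (pow_ne_zero _ (sub_ne_zero.mpr hzz))]
    · have hh : AnalyticAt ℂ h z₀ := hdiff.analyticAt (isOpen_ball.mem_nhds hz₀)
      have hG : AnalyticAt ℂ (fun z => h z / φ z) z₀ := hh.div (hφa z₀) (hφne z₀ hz₀T)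
      apply hG.congr
      have hopen : IsOpen ((↑T : Set ℂ))ᶜ :=
        (Set.Finite.isClosed (Finset.finite_toSet _)).isOpen_compl
      filter_upwards [hopen.mem_nhds (by simpa using hz₀T)] with z hz
      have hzT : z ∉ T := by simpa using hz
      simp only [hFdef, if_neg hzT]
  set H : ℂ → ℂ := fun z =>
    F z * ∏ w ∈ T, (((r : ℂ)) ^ 2 - (starRingEnd ℂ) w * z) ^ (m w) with hHdef
  have hHdiff : DifferentiableOn ℂ H (ball (0 : ℂ) 1) := by
    intro z hz
    refine DifferentiableAt.differentiableWithinAt ?_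
    refine ((hFa z hz).differentiableAt).mul ?_
    refine Differentiable.differentiableAt ?_
    apply Differentiable.fun_finset_prod
    intro w _
    exact ((differentiable_const _).sub ((differentiable_const _).mul differentiable_id)).pow _
  set E : ℝ := Real.exp (C₀ / (1 - r) ^ α) with hEdef
  have hE0 : 0 < E := Real.exp_pos _
  -- boundary estimate
  have hbdry : ∀ z ∈ frontier (ball (0 : ℂ) r), ‖H z‖ ≤ E * r ^ N := by
    intro z hz
    rw [frontier_ball _ (ne_of_gt hr0)] at hz
    have hzr : ‖z‖ = r := by
      simpa using mem_sphere_zero_iff_norm.mp hz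
    have hzball : z ∈ ball (0 : ℂ) 1 := by
      simp only [mem_ball, Complex.dist_eq, sub_zero]
      rw [hzr]; exact hr1
    have hzT : z ∉ T := by
      intro hzT
      have := (hTS z hzT).2
      rw [hzr] at this
      linarith
    have hfac : ∀ w ∈ T, ‖(r : ℂ) ^ 2 - (starRingEnd ℂ) w * z‖
        = ‖z - w‖ * r := by
      intro w hw
      have hzz : ((r : ℝ) : ℂ) ^ 2 = z * (starRingEnd ℂ) z := by
        rw [Complex.mul_conj, ← Complex.sq_norm, hzr]
        push_cast
        ring
      have heq : (r : ℂ) ^ 2 - (starRingEnd ℂ) w * z = (starRingEnd ℂ) (z - w) * z := by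
        rw [map_sub, hzz]; ring
      rw [heq, norm_mul, Complex.norm_conj, hzr]
    have hφabs : ‖φ z‖ = ∏ w ∈ T, ‖z - w‖ ^ (m w) := by
      simp only [hφdef, norm_prod, norm_pow]
    have hφzne : ‖φ z‖ ≠ 0 := by
      simpa using hφne z hzT
    have hHz : ‖H z‖ = ‖h z‖ * r ^ N := by
      rw [hHdef]
      simp only [norm_mul, norm_prod, norm_pow]
      have h1 : ∏ w ∈ T, ‖(r : ℂ) ^ 2 - (starRingEnd ℂ) w * z‖ ^ (m w)
          = (∏ w ∈ T, ‖z - w‖ ^ (m w)) * r ^ N := by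
        rw [hNdef, ← Finset.prod_pow_eq_pow_sum, ← Finset.prod_mul_distrib]
        exact Finset.prod_congr rfl (fun w hw => by rw [hfac w hw, mul_pow])
      rw [h1]
      simp only [hFdef, if_neg hzT]
      rw [norm_div, hφabs]
      rw [div_mul_eq_mul_div, mul_comm (∏ w ∈ T, ‖z - w‖ ^ m w) (r ^ N),
        ← mul_assoc, mul_div_assoc, div_self (hφabs ▸ hφzne), mul_one]
    rw [hHz]
    have hhz : ‖h z‖ ≤ E := by
      rcases eq_or_ne (‖h z‖) 0 with h' | h'
      · rw [h']; exact hE0.le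
      · have hpos : 0 < ‖h z‖ :=
          lt_of_le_of_ne (norm_nonneg _) (Ne.symm h')
        have hb := hgrowth z hzball
        rw [hzr] at hb
        exact (Real.log_le_iff_le_exp hpos).mp hb
    exact mul_le_mul_of_nonneg_right hhz (by positivity)
  -- maximum modulus
  have hmax : ‖H 0‖ ≤ E * r ^ N := by
    refine Complex.norm_le_of_forall_mem_frontier_norm_le isBounded_ball ?_ hbdry ?_
    · apply DifferentiableOn.diffContOnCl
      rw [closure_ball _ (ne_of_gt hr0)]
      exact hHdiff.mono (closedBall_subset_ball hr1)
    · rw [closure_ball _ (ne_of_gt hr0)]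
      exact mem_closedBall_self hr0.le
  -- compute ‖H 0‖
  have h0T : (0 : ℂ) ∉ T := fun h0T => (hw0 0 (hTS 0 h0T).1) rfl
  have habsr2 : ‖(r : ℂ) ^ 2‖ = r ^ 2 := by
    rw [norm_pow, Complex.norm_real, Real.norm_eq_abs, abs_of_pos hr0]
  have hH0 : ‖H 0‖ = (r ^ 2) ^ N / ∏ w ∈ T, ‖w‖ ^ (m w) := by
    rw [hHdef]
    simp only [norm_mul, norm_prod, norm_pow]
    have hF0 : F 0 = 1 / φ 0 := by
      simp only [hFdef, if_neg h0T, h0]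
    have hφ0 : ‖φ 0‖ = ∏ w ∈ T, ‖w‖ ^ (m w) := by
      simp only [hφdef, norm_prod, norm_pow]
      exact Finset.prod_congr rfl fun w _ => by rw [zero_sub, norm_neg]
    have hprod0 : ∏ w ∈ T, ‖(r : ℂ) ^ 2 - (starRingEnd ℂ) w * 0‖ ^ m w
        = (r ^ 2) ^ N := by
      rw [hNdef, ← Finset.prod_pow_eq_pow_sum]
      exact Finset.prod_congr rfl fun w _ => by rw [mul_zero, sub_zero, habsr2]
    rw [hF0, hprod0, norm_div, norm_one, hφ0, one_div, inv_mul_eq_div]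
  have hden_pos : 0 < ∏ w ∈ T, ‖w‖ ^ m w :=
    Finset.prod_pos fun w hw => pow_pos (hTabs w hw) _
  have hden_le : ∏ w ∈ T, ‖w‖ ^ m w ≤ s ^ N := by
    rw [hNdef, ← Finset.prod_pow_eq_pow_sum]
    exact Finset.prod_le_prod (fun w hw => (pow_pos (hTabs w hw) _).le)
      (fun w hw => pow_le_pow_left₀ (norm_nonneg _) (hTS w hw).2 _)
  have hlow : (r ^ 2) ^ N / s ^ N ≤ ‖H 0‖ := by
    rw [hH0]
    exact div_le_div_of_nonneg_left (by positivity) hden_pos hden_le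
  have key2 : (r / s) ^ N ≤ E := by
    have h1 : (r ^ 2) ^ N / s ^ N ≤ E * r ^ N := hlow.trans hmax
    have hrpow : (0 : ℝ) < r ^ N := pow_pos hr0 _
    have h2 : (r / s) ^ N * r ^ N = (r ^ 2) ^ N / s ^ N := by
      rw [← mul_pow, ← div_pow]
      congr 1
      field_simp
    rw [← mul_le_mul_iff_of_pos_right hrpow, h2]
    exact h1
  have hrs1 : 1 < r / s := (one_lt_div hs0).mpr hrs
  have hN1 : (N : ℝ) * Real.log (r / s) ≤ C₀ / (1 - r) ^ α := by
    have hl := Real.log_le_log (pow_pos (by positivity) N) key2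
    rw [Real.log_pow, hEdef, Real.log_exp] at hl
    exact hl
  have hlogge : (1 - s) / 2 ≤ Real.log (r / s) := by
    have h1 : Real.log (s / r) ≤ s / r - 1 := Real.log_le_sub_one_of_pos (by positivity)
    have h2 : Real.log (r / s) = -Real.log (s / r) := by
      rw [Real.log_div (ne_of_gt hr0) (ne_of_gt hs0), Real.log_div (ne_of_gt hs0) (ne_of_gt hr0)]
      ring
    have hid : 1 - s / r = ((1 - s) / 2) / r := by
      have h1s' : (1 + s) ≠ 0 := by linarith
      rw [hrdef]
      field_simp
      ring
    have h3 : (1 - s) / 2 ≤ 1 - s / r := by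
      rw [hid, le_div_iff₀ hr0]
      nlinarith [mul_nonneg (by linarith : (0:ℝ) ≤ (1 - s) / 2) (by linarith : (0:ℝ) ≤ 1 - r)]
    rw [h2]
    linarith
  have hNbound : (N : ℝ) * ((1 - s) / 2) ≤ C₀ / (1 - r) ^ α :=
    le_trans (mul_le_mul_of_nonneg_left hlogge (Nat.cast_nonneg N)) hN1
  -- final arithmetic
  have h1s : (0 : ℝ) < 1 - s := by linarith
  have hpowα : (1 - r) ^ α = (1 - s) ^ α / 2 ^ α := by
    rw [h1r, Real.div_rpow h1s.le (by norm_num)]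
  have hα1 : (1 - s) ^ (α + 1) = (1 - s) ^ α * (1 - s) := by
    rw [Real.rpow_add h1s, Real.rpow_one]
  have h2α1 : (2 : ℝ) ^ (α + 1) = 2 ^ α * 2 := by
    rw [Real.rpow_add (by norm_num : (0:ℝ) < 2), Real.rpow_one]
  have hppos : (0 : ℝ) < (1 - s) ^ α := Real.rpow_pos_of_pos h1s _
  have h2pos : (0 : ℝ) < (2 : ℝ) ^ α := Real.rpow_pos_of_pos (by norm_num) _
  rw [hpowα, div_div_eq_mul_div] at hNbound
  rw [le_div_iff₀ hppos] at hNbound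
  have hsum : ∑ w ∈ T, (m w : ℝ) = (N : ℝ) := by
    rw [hNdef, Nat.cast_sum]
  rw [hsum, h2α1, hα1, le_div_iff₀ (by positivity)]
  calc (N : ℝ) * ((1 - s) ^ α * (1 - s)) = 2 * ((N : ℝ) * ((1 - s) / 2) * (1 - s) ^ α) := by ring
    _ ≤ 2 * (C₀ * 2 ^ α) := by linarith
    _ = 2 ^ α * 2 * C₀ := by ring


/-- If `h` is holomorphic in the unit disc, `h 0 = 1`, and
`log |h(w)| ≤ C₀ / (1-|w|)^α`, then the zeros of `h` (counted with multiplicity,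
i.e. order of vanishing `m w`) satisfy `∑ (1-|w|)^(α+τ+1) ≤ C(α,τ) · C₀`. -/
theorem zero_sum_est_simple (α : ℝ) (hα : 0 < α) (τ : ℝ) (hτ : 0 < τ) :
    ∃ C : ℝ, 0 < C ∧
      ∀ (C₀ : ℝ), 0 ≤ C₀ →
      ∀ (h : ℂ → ℂ), DifferentiableOn ℂ h (ball (0 : ℂ) 1) → h 0 = 1 →
      (∀ w ∈ ball (0 : ℂ) 1, Real.log (‖h w‖) ≤ C₀ / (1 - ‖w‖) ^ α) →
      ∀ (S : Finset ℂ) (m : ℂ → ℕ),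
        (∀ w ∈ S, w ∈ ball (0 : ℂ) 1 ∧ h w = 0 ∧
          ∃ g : ℂ → ℂ, AnalyticAt ℂ g w ∧ g w ≠ 0 ∧
            ∀ᶠ z in nhds w, h z = (z - w) ^ (m w) * g z) →
        ∑ w ∈ S, (m w : ℝ) * (1 - ‖w‖) ^ (α + τ + 1) ≤ C * C₀ := by
  classical
  have h2 : (0:ℝ) < 2 := by norm_num
  set q : ℝ := (2:ℝ) ^ (-τ) with hq
  have hq0 : 0 < q := Real.rpow_pos_of_pos h2 _
  have hq1 : q < 1 := Real.rpow_lt_one_of_one_lt_of_neg (by norm_num) (by linarith)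
  refine ⟨(2:ℝ) ^ (2*(α+1)) / (1 - q), div_pos (Real.rpow_pos_of_pos h2 _) (by linarith), ?_⟩
  intro C₀ hC₀ h hdiff h0 hgrowth S m hS
  set κ : ℂ → ℕ := fun w => Nat.log 2 ⌊(1 - ‖w‖)⁻¹⌋₊ with hκdef
  set K : ℕ := S.sup κ + 1 with hKdef
  have hmaps : ∀ w ∈ S, κ w ∈ Finset.range K := fun w hw =>
    Finset.mem_range.mpr (Nat.lt_succ_of_le (Finset.le_sup hw))
  rw [← Finset.sum_fiberwise_of_maps_to hmaps
    (fun w => (m w : ℝ) * (1 - ‖w‖) ^ (α + τ + 1))]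
  have hβ0 : (0:ℝ) ≤ α + τ + 1 := by linarith
  have fiber_bound : ∀ k ∈ Finset.range K,
      (∑ w ∈ S.filter (fun w => κ w = k), (m w : ℝ) * (1 - ‖w‖) ^ (α + τ + 1))
        ≤ (2:ℝ) ^ (2*(α+1)) * C₀ * q ^ k := by
    intro k _
    set sk : ℝ := 1 - ((2:ℝ) ^ (k+1))⁻¹ with hskdef
    have h2k1 : (0:ℝ) < (2:ℝ) ^ (k+1) := by positivity
    have h2k : (0:ℝ) < (2:ℝ) ^ k := by positivity
    have h2le : (2:ℝ) ≤ (2:ℝ) ^ (k+1) := by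
      calc (2:ℝ) = 2 ^ 1 := (pow_one 2).symm
        _ ≤ 2 ^ (k+1) := by apply pow_le_pow_right₀ (by norm_num); omega
    have hinv2 : ((2:ℝ) ^ (k+1))⁻¹ ≤ 2⁻¹ := by
      exact inv_anti₀ h2 h2le
    have hsk0 : 0 < sk := by rw [hskdef]; norm_num at hinv2 ⊢; linarith
    have hsk1 : sk < 1 := by rw [hskdef]; linarith [inv_pos.mpr h2k1]
    have hfact : ∀ w ∈ S.filter (fun w => κ w = k),
        ‖w‖ ≤ sk ∧ (1 - ‖w‖) ≤ ((2:ℝ) ^ k)⁻¹ := by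
      intro w hw
      obtain ⟨hwS, hwk⟩ := Finset.mem_filter.mp hw
      have hwb : ‖w‖ < 1 := by
        have := (hS w hwS).1
        simpa [mem_ball, Complex.dist_eq] using this
      have ha0 : 0 < 1 - ‖w‖ := by linarith
      have ha1 : 1 - ‖w‖ ≤ 1 := by
        linarith [norm_nonneg w]
      have hainv1 : 1 ≤ (1 - ‖w‖)⁻¹ := (one_le_inv₀ ha0).mpr ha1
      have hn0 : ⌊(1 - ‖w‖)⁻¹⌋₊ ≠ 0 := by
        have : 0 < ⌊(1 - ‖w‖)⁻¹⌋₊ := Nat.floor_pos.mpr hainv1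
        omega
      have hlogk : Nat.log 2 ⌊(1 - ‖w‖)⁻¹⌋₊ = k := hwk
      constructor
      · have hfl : ((1 - ‖w‖)⁻¹ : ℝ) < ⌊(1 - ‖w‖)⁻¹⌋₊ + 1 :=
          Nat.lt_floor_add_one _
        have hup : (⌊(1 - ‖w‖)⁻¹⌋₊ : ℝ) + 1 ≤ (2:ℝ) ^ (k+1) := by
          have hlt := Nat.lt_pow_succ_log_self (by norm_num : 1 < 2) ⌊(1 - ‖w‖)⁻¹⌋₊
          rw [hlogk] at hlt
          exact_mod_cast Nat.succ_le_of_lt hlt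
        have h3 : (1 - ‖w‖)⁻¹ < (2:ℝ) ^ (k+1) := lt_of_lt_of_le hfl hup
        have h4 : ((2:ℝ) ^ (k+1))⁻¹ < 1 - ‖w‖ := by
          rw [← inv_inv (1 - ‖w‖)]
          exact inv_strictAnti₀ (inv_pos.mpr ha0) h3
        rw [hskdef]; linarith
      · have hlow : ((2:ℝ) ^ k) ≤ (1 - ‖w‖)⁻¹ := by
          have h5 : (2 ^ k : ℕ) ≤ ⌊(1 - ‖w‖)⁻¹⌋₊ := by
            rw [← hlogk]; exact Nat.pow_log_le_self 2 hn0
          have h6 : ((⌊(1 - ‖w‖)⁻¹⌋₊ : ℝ)) ≤ (1 - ‖w‖)⁻¹ :=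
            Nat.floor_le (by positivity)
          calc ((2:ℝ) ^ k) = ((2 ^ k : ℕ) : ℝ) := by push_cast; ring
            _ ≤ (⌊(1 - ‖w‖)⁻¹⌋₊ : ℝ) := by exact_mod_cast h5
            _ ≤ (1 - ‖w‖)⁻¹ := h6
        calc 1 - ‖w‖ = ((1 - ‖w‖)⁻¹)⁻¹ := (inv_inv _).symm
          _ ≤ ((2:ℝ) ^ k)⁻¹ := inv_anti₀ h2k hlow
    have hid : (2:ℝ) ^ (α+1) / (((2:ℝ) ^ (k+1))⁻¹) ^ (α+1) * (((2:ℝ) ^ k)⁻¹) ^ (α+τ+1)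
        = (2:ℝ) ^ (2*(α+1)) * q ^ k := by
      have e1 : ((2:ℝ) ^ (k+1))⁻¹ = (2:ℝ) ^ (-(((k:ℝ)) + 1)) := by
        rw [← Real.rpow_natCast 2 (k+1), ← Real.rpow_neg h2.le]
        norm_num
      have e2 : ((2:ℝ) ^ k)⁻¹ = (2:ℝ) ^ (-(k:ℝ)) := by
        rw [← Real.rpow_natCast 2 k, ← Real.rpow_neg h2.le]
      have e3 : q ^ k = (2:ℝ) ^ (-τ * (k:ℝ)) := by
        rw [hq, ← Real.rpow_natCast ((2:ℝ) ^ (-τ)) k, ← Real.rpow_mul h2.le]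
      rw [e1, e2, e3, ← Real.rpow_mul h2.le, ← Real.rpow_mul h2.le, div_eq_mul_inv,
        ← Real.rpow_neg h2.le, ← Real.rpow_add h2, ← Real.rpow_add h2, ← Real.rpow_add h2]
      congr 1
      push_cast
      ring
    calc ∑ w ∈ S.filter (fun w => κ w = k), (m w : ℝ) * (1 - ‖w‖) ^ (α + τ + 1)
        ≤ ∑ w ∈ S.filter (fun w => κ w = k), (m w : ℝ) * (((2:ℝ) ^ k)⁻¹) ^ (α + τ + 1) := by
          apply Finset.sum_le_sum
          intro w hw
          obtain ⟨hwS, -⟩ := Finset.mem_filter.mp hw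
          have hwb : ‖w‖ < 1 := by
            have := (hS w hwS).1
            simpa [mem_ball, Complex.dist_eq] using this
          exact mul_le_mul_of_nonneg_left
            (Real.rpow_le_rpow (by linarith) (hfact w hw).2 hβ0) (Nat.cast_nonneg _)
      _ = (∑ w ∈ S.filter (fun w => κ w = k), (m w : ℝ)) * (((2:ℝ) ^ k)⁻¹) ^ (α + τ + 1) := by
          rw [Finset.sum_mul]
      _ ≤ ((2:ℝ) ^ (α+1) * C₀ / (1 - sk) ^ (α+1)) * (((2:ℝ) ^ k)⁻¹) ^ (α + τ + 1) := by
          apply mul_le_mul_of_nonneg_right _ (by positivity)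
          refine le_trans (Finset.sum_le_sum_of_subset_of_nonneg ?_
              (fun w _ _ => Nat.cast_nonneg _))
            (count_aux α hα C₀ hC₀ h hdiff h0 hgrowth S m hS sk hsk0 hsk1)
          intro w hw
          obtain ⟨hwS, -⟩ := Finset.mem_filter.mp hw
          exact Finset.mem_filter.mpr ⟨hwS, (hfact w hw).1⟩
      _ = (2:ℝ) ^ (2*(α+1)) * C₀ * q ^ k := by
          have hss : (1:ℝ) - sk = ((2:ℝ) ^ (k+1))⁻¹ := by rw [hskdef]; ring
          rw [hss]
          calc (2:ℝ) ^ (α+1) * C₀ / (((2:ℝ) ^ (k+1))⁻¹) ^ (α+1) * (((2:ℝ) ^ k)⁻¹) ^ (α+τ+1)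
              = C₀ * ((2:ℝ) ^ (α+1) / (((2:ℝ) ^ (k+1))⁻¹) ^ (α+1)
                  * (((2:ℝ) ^ k)⁻¹) ^ (α+τ+1)) := by ring
            _ = C₀ * ((2:ℝ) ^ (2*(α+1)) * q ^ k) := by rw [hid]
            _ = (2:ℝ) ^ (2*(α+1)) * C₀ * q ^ k := by ring
  calc ∑ k ∈ Finset.range K, ∑ w ∈ S.filter (fun w => κ w = k),
        (m w : ℝ) * (1 - ‖w‖) ^ (α + τ + 1)
      ≤ ∑ k ∈ Finset.range K, (2:ℝ) ^ (2*(α+1)) * C₀ * q ^ k :=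
        Finset.sum_le_sum fiber_bound
    _ = (2:ℝ) ^ (2*(α+1)) * C₀ * ∑ k ∈ Finset.range K, q ^ k := by
        rw [Finset.mul_sum]
    _ ≤ (2:ℝ) ^ (2*(α+1)) * C₀ * (1 / (1 - q)) := by
        apply mul_le_mul_of_nonneg_left _ (by positivity)
        rw [geom_sum_eq (ne_of_lt hq1)]
        have hrw : ((q:ℝ) ^ K - 1) / (q - 1) = (1 - q ^ K) / (1 - q) := by
          rw [← neg_sub 1 (q ^ K), ← neg_sub 1 q, neg_div_neg_eq]
        rw [hrw]
        rw [div_le_div_iff₀ (by linarith) (by linarith)]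
        have := pow_nonneg hq0.le K
        nlinarith
    _ = (2:ℝ) ^ (2*(α+1)) / (1 - q) * C₀ := by ring
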